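/- Let P and P' be separated distributed places over tagged-transition-identified places, and let P ⊗ P' = {π_{Z ∪ Z'} | π_Z ∈ P, π_{Z'} ∈ P'} be their cross-product. Then for every transition t adjacent to P: •t ∩ (P ⊗ P') = (•t ∩ P) ⊗ P' and t• ∩ (P ⊗ P') = (t• ∩ P) ⊗ P', and symmetrically for transitions adjacent to P'. -/
import Mathlib


open Set

structure Net (P T : Type) where
  pre : T → Set P
  post : T → Set P
  minit : Set P

variable {P T : Type}

def fireable (N : Net P T) (t : T) (M : Set P) : Prop := N.pre t ⊆ M

def fire (N : Net P T) (t : T) (M : Set P) : Set P := (M \ N.pre t) ∪ N.post t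

def valid (N : Net P T) : Set P → List T → Prop
  | _, [] => True
  | M, t :: σ => fireable N t M ∧ valid N (fire N t M) σ

def runFrom (N : Net P T) (M : Set P) (σ : List T) : Set P :=
  σ.foldl (fun M t => fire N t M) M

def isFiringSeq (N : Net P T) (σ : List T) : Prop := valid N N.minit σ

def reachable (N : Net P T) (M : Set P) : Prop :=
  ∃ σ, isFiringSeq N σ ∧ runFrom N N.minit σ = M

def safe (N : Net P T) : Prop :=
  ∀ M, reachable N M → ∀ t, fireable N t M → (N.post t \ N.pre t) ∩ M = ∅

/-- transitions inserting tokens into some place of `Q` (the set `•Q`). -/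
def preQ (N : Net P T) (Q : Set P) : Set T := {t | (N.post t ∩ Q).Nonempty}

/-- transitions removing tokens from some place of `Q` (the set `Q•`). -/
def postQ (N : Net P T) (Q : Set P) : Set T := {t | (N.pre t ∩ Q).Nonempty}

def adjQ (N : Net P T) (Q : Set P) : Set T := preQ N Q ∪ postQ N Q

def insQ (N : Net P T) (Q : Set P) : Set T := preQ N Q \ postQ N Q

def remQ (N : Net P T) (Q : Set P) : Set T := postQ N Q \ preQ N Q

def readQ (N : Net P T) (Q : Set P) : Set T :=
  {t ∈ adjQ N Q | N.pre t ∩ Q = N.post t ∩ Q}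

def enablesQ (N : Net P T) (Q : Set P) : Set (T × T) :=
  {tu | (Q ∩ (N.post tu.1 \ N.pre tu.1) ∩ N.pre tu.2).Nonempty}

def disablesQ (N : Net P T) (Q : Set P) : Set (T × T) :=
  {tu | (Q ∩ (N.pre tu.1 \ N.post tu.1) ∩ N.pre tu.2).Nonempty}

def postList (N : Net P T) (l : List T) : Set P := ⋃ t ∈ l, N.post t

def epreList (N : Net P T) (l : List T) : Set P := ⋃ t ∈ l, (N.pre t \ N.post t)

def isInSeq (N : Net P T) (Q : Set P) (σ : List T) : Prop :=
  σ ≠ [] ∧ (∀ t ∈ σ, t ∈ insQ N Q ∪ readQ N Q) ∧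
  (∀ t ∈ σ.head?, t ∈ insQ N Q) ∧
  ∀ i (h : i < σ.length), 0 < i →
    Q ∩ N.pre (σ.get ⟨i, h⟩) ⊆ postList N (σ.take i) ∧
    Q ∩ (N.post (σ.get ⟨i, h⟩) \ N.pre (σ.get ⟨i, h⟩)) ∩ postList N (σ.take i) = ∅

def isCInSeq (N : Net P T) (Q : Set P) (σ : List T) : Prop :=
  isInSeq N Q σ ∧ Q ⊆ postList N σ

def isOutSeq (N : Net P T) (Q : Set P) (σ : List T) : Prop :=
  σ ≠ [] ∧ (∀ t ∈ σ, t ∈ remQ N Q ∪ readQ N Q) ∧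
  (∀ t ∈ σ.head?, t ∈ remQ N Q) ∧
  ∀ i (h : i < σ.length), 0 < i →
    Q ∩ N.pre (σ.get ⟨i, h⟩) ⊆ Q \ epreList N (σ.take i)

def isCOutSeq (N : Net P T) (Q : Set P) (σ : List T) : Prop :=
  isOutSeq N Q σ ∧ Q ⊆ epreList N σ

def distPlace (N : Net P T) (Q : Set P) : Prop :=
  Q.Nonempty ∧
  adjQ N Q = insQ N Q ∪ remQ N Q ∪ readQ N Q ∧
  (∀ t ∈ insQ N Q, ∀ u ∈ remQ N Q, (t, u) ∈ enablesQ N Q) ∧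
  (∀ σ, isInSeq N Q σ → ∃ τ, σ <+: τ ∧ isCInSeq N Q τ) ∧
  (∀ σ, isOutSeq N Q σ → ∃ τ, σ <+: τ ∧ isCOutSeq N Q τ)

def pureDP (N : Net P T) (Q : Set P) : Prop := postQ N Q ∩ preQ N Q = ∅

def separated (N : Net P T) (Q R : Set P) : Prop := adjQ N Q ∩ adjQ N R = ∅

/-- tagged transitions `t^in` / `t^out` identifying places -/
inductive Tag (T : Type) where
  | inp : T → Tag T
  | out : T → Tag T

/-- the net whose places are identified with their sets of tagged adjacent
transitions: `(t, π_Z) ∈ Fl` iff `t^in ∈ Z` and `(π_Z, t) ∈ Fl` iff `t^out ∈ Z`. -/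
def tagNet (T : Type) : Net (Set (Tag T)) T where
  pre t := {Z | Tag.out t ∈ Z}
  post t := {Z | Tag.inp t ∈ Z}
  minit := ∅

/-- cross-product of sets of tagged places -/
def cross {T : Type} (Q R : Set (Set (Tag T))) : Set (Set (Tag T)) :=
  {W | ∃ Z ∈ Q, ∃ Z' ∈ R, W = Z ∪ Z'}

lemma cross_comm {T : Type} (Q R : Set (Set (Tag T))) : cross Q R = cross R Q := by
  ext W
  constructor <;> rintro ⟨Z, hZ, Z', hZ', rfl⟩ <;>
    exact ⟨Z', hZ', Z, hZ, (Set.union_comm _ _)⟩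

lemma key {T : Type} (x : Tag T) (A B : Set (Set (Tag T)))
    (hB : ∀ Z' ∈ B, x ∉ Z') :
    {Z | x ∈ Z} ∩ cross A B = cross ({Z | x ∈ Z} ∩ A) B := by
  ext W
  constructor
  · rintro ⟨hx, Z, hZ, Z', hZ', rfl⟩
    rcases hx with hx | hx
    · exact ⟨Z, ⟨hx, hZ⟩, Z', hZ', rfl⟩
    · exact absurd hx (hB Z' hZ')
  · rintro ⟨Z, ⟨hx, hZ⟩, Z', hZ', rfl⟩
    exact ⟨Or.inl hx, Z, hZ, Z', hZ', rfl⟩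

/-- cross-product distributes over presets/postsets of adjacent
transitions of separated distributed places. -/
theorem stmt11 (T : Type) (A B : Set (Set (Tag T)))
    (hA : distPlace (tagNet T) A) (hB : distPlace (tagNet T) B)
    (hsep : separated (tagNet T) A B) :
    (∀ t ∈ adjQ (tagNet T) A,
      (tagNet T).pre t ∩ cross A B = cross ((tagNet T).pre t ∩ A) B ∧
      (tagNet T).post t ∩ cross A B = cross ((tagNet T).post t ∩ A) B) ∧
    (∀ t ∈ adjQ (tagNet T) B,
      (tagNet T).pre t ∩ cross A B = cross ((tagNet T).pre t ∩ B) A ∧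
      (tagNet T).post t ∩ cross A B = cross ((tagNet T).post t ∩ B) A) := by
  have sep : ∀ t, t ∈ adjQ (tagNet T) A → t ∉ adjQ (tagNet T) B := by
    intro t hA hB
    have : t ∈ adjQ (tagNet T) A ∩ adjQ (tagNet T) B := ⟨hA, hB⟩
    rw [hsep] at this
    exact this
  have sep' : ∀ t, t ∈ adjQ (tagNet T) B → t ∉ adjQ (tagNet T) A := by
    intro t hB hA
    exact sep t hA hB
  have notadj : ∀ (Q : Set (Set (Tag T))) t, t ∉ adjQ (tagNet T) Q →
      (∀ Z ∈ Q, Tag.out t ∉ Z) ∧ (∀ Z ∈ Q, Tag.inp t ∉ Z) := by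
    intro Q t ht
    constructor
    · intro Z hZ hx
      exact ht (Or.inr ⟨Z, hx, hZ⟩)
    · intro Z hZ hx
      exact ht (Or.inl ⟨Z, hx, hZ⟩)
  constructor
  · intro t ht
    obtain ⟨h1, h2⟩ := notadj B t (sep t ht)
    exact ⟨key (Tag.out t) A B h1, key (Tag.inp t) A B h2⟩
  · intro t ht
    obtain ⟨h1, h2⟩ := notadj A t (sep' t ht)
    rw [cross_comm A B]
    exact ⟨key (Tag.out t) B A h1, key (Tag.inp t) B A h2⟩
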